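/- For every n ≥ 1, the number of states y : Fin n → ZMod 2 with no two cyclically adjacent 1s (no i with y_i = y_{i+1} = 1, indices mod n) equals fib(n+1) + fib(n−1), the n-th Lucas number. -/

import Mathlib

private lemma zmod2_ne_one {x : ZMod 2} : ¬ x = 1 ↔ x = 0 := by revert x; decide
private lemma zmod2_ne_zero {x : ZMod 2} : ¬ x = 0 ↔ x = 1 := by revert x; decide

private def Qlin (n : ℕ) (y : Fin (n+1) → ZMod 2) : Prop :=
  ∀ i : Fin n, ¬(y i.castSucc = 1 ∧ y i.succ = 1)

private instance (n : ℕ) : DecidablePred (Qlin n) := fun _ => by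
  unfold Qlin; infer_instance

private def q (n : ℕ) (a b : ZMod 2) : ℕ :=
  Fintype.card {y : Fin (n+1) → ZMod 2 // Qlin n y ∧ y 0 = a ∧ y (Fin.last n) = b}

example : q 0 0 0 = 1 ∧ q 0 1 0 = 0 ∧ q 0 0 1 = 0 := by decide
example : q 1 0 1 = 1 ∧ q 1 1 1 = 0 := by decide

private lemma card_split {α : Type*} [Fintype α] (p q : α → Prop)
    [DecidablePred p] [DecidablePred q] :
    Fintype.card {x // p x} =
      Fintype.card {x // p x ∧ q x} + Fintype.card {x // p x ∧ ¬ q x} := by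
  classical
  rw [Fintype.card_subtype, Fintype.card_subtype, Fintype.card_subtype,
    ← Finset.filter_filter, ← Finset.filter_filter,
    Finset.card_filter_add_card_filter_not]

private def consEquiv (n : ℕ) (a b : ZMod 2) :
    {y : Fin (n+2) → ZMod 2 // Qlin (n+1) y ∧ y 0 = a ∧ y (Fin.last (n+1)) = b} ≃
    {z : Fin (n+1) → ZMod 2 // ¬(a = 1 ∧ z 0 = 1) ∧ Qlin n z ∧ z (Fin.last n) = b} where
  toFun := fun ⟨y, hQ, h0, hl⟩ =>
    ⟨Fin.tail y, by
      refine ⟨?_, ?_, ?_⟩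
      · have := hQ 0
        simpa [Fin.tail, h0] using this
      · intro i
        have := hQ i.succ
        simpa [Fin.tail, ← Fin.succ_castSucc] using this
      · simpa [Fin.tail, Fin.succ_last] using hl⟩
  invFun := fun ⟨z, h1, hQ, hl⟩ =>
    ⟨Fin.cons a z, by
      refine ⟨?_, ?_, ?_⟩
      · intro i
        induction i using Fin.cases with
        | zero => simpa using h1
        | succ j =>
          have := hQ j
          simpa [← Fin.succ_castSucc, -Fin.castSucc_succ] using this
      · simp
      · simpa [← Fin.succ_last] using hl⟩
  left_inv := fun ⟨y, hQ, h0, hl⟩ => by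
    ext1
    simp only
    rw [← h0, Fin.cons_self_tail]
  right_inv := fun ⟨z, h1, hQ, hl⟩ => by
    ext1
    simp only
    rw [Fin.tail_cons]

private lemma q_rec0 (n : ℕ) (b : ZMod 2) : q (n+1) 0 b = q n 0 b + q n 1 b := by
  have h := Fintype.card_congr (consEquiv n 0 b)
  rw [q, h]
  have h2 : Fintype.card {z : Fin (n+1) → ZMod 2 //
      ¬((0:ZMod 2) = 1 ∧ z 0 = 1) ∧ Qlin n z ∧ z (Fin.last n) = b}
      = Fintype.card {z : Fin (n+1) → ZMod 2 // Qlin n z ∧ z (Fin.last n) = b} :=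
    Fintype.card_congr (Equiv.subtypeEquivRight (fun z => by
      simp [(by decide : ¬ (0:ZMod 2) = 1)]))
  rw [h2, card_split (fun z : Fin (n+1) → ZMod 2 => Qlin n z ∧ z (Fin.last n) = b)
    (fun z => z 0 = 0)]
  congr 1
  · exact Fintype.card_congr (Equiv.subtypeEquivRight (fun z => by
      constructor
      · rintro ⟨⟨hq, hb⟩, h0⟩; exact ⟨hq, h0, hb⟩
      · rintro ⟨hq, h0, hb⟩; exact ⟨⟨hq, hb⟩, h0⟩))
  · exact Fintype.card_congr (Equiv.subtypeEquivRight (fun z => by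
      constructor
      · rintro ⟨⟨hq, hb⟩, h0⟩; exact ⟨hq, zmod2_ne_zero.mp h0, hb⟩
      · rintro ⟨hq, h0, hb⟩; exact ⟨⟨hq, hb⟩, zmod2_ne_zero.mpr h0⟩))

private lemma q_rec1 (n : ℕ) (b : ZMod 2) : q (n+1) 1 b = q n 0 b := by
  have h := Fintype.card_congr (consEquiv n 1 b)
  rw [q, h]
  exact Fintype.card_congr (Equiv.subtypeEquivRight (fun z => by
    constructor
    · rintro ⟨h1, hq, hb⟩
      exact ⟨hq, zmod2_ne_one.mp (fun hz => h1 ⟨rfl, hz⟩), hb⟩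
    · rintro ⟨hq, h0, hb⟩
      exact ⟨fun hc => by rw [h0] at hc; exact absurd hc.2 (by decide), hq, hb⟩))

private lemma q00_q10 (n : ℕ) : q n 0 0 = Nat.fib (n+1) ∧ q n 1 0 = Nat.fib n := by
  induction n with
  | zero => exact ⟨by decide, by decide⟩
  | succ n ih =>
    obtain ⟨h0, h1⟩ := ih
    refine ⟨?_, ?_⟩
    · rw [q_rec0, h0, h1, Nat.fib_add_two]; omega
    · rw [q_rec1, h0]

private lemma q01_q11 (n : ℕ) :
    q (n+1) 0 1 = Nat.fib (n+1) ∧ q (n+1) 1 1 = Nat.fib n := by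
  induction n with
  | zero => exact ⟨by decide, by decide⟩
  | succ n ih =>
    obtain ⟨h0, h1⟩ := ih
    refine ⟨?_, ?_⟩
    · rw [q_rec0, h0, h1, Nat.fib_add_two]; omega
    · rw [q_rec1, h0]

theorem stmt_18 :
    ∀ m : ℕ,
      Nat.card {y : Fin (m + 1) → ZMod 2 |
          ∀ i : Fin (m + 1), ¬(y i = 1 ∧ y (i + 1) = 1)}
        = Nat.fib (m + 2) + Nat.fib m := by
  intro m
  match m with
  | 0 =>
    rw [Nat.card_eq_fintype_card]
    decide
  | (m+1) =>
    rw [Nat.card_eq_fintype_card]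
    have e1 : Fintype.card {y : Fin (m + 2) → ZMod 2 |
          ∀ i : Fin (m + 2), ¬(y i = 1 ∧ y (i + 1) = 1)}
        = Fintype.card {y : Fin (m+2) → ZMod 2 //
          (Qlin (m+1) y ∧ ¬(y (Fin.last (m+1)) = 1 ∧ y 0 = 1))} := by
      apply Fintype.card_congr
      apply Equiv.subtypeEquivRight
      intro y
      simp only [Set.mem_setOf_eq]
      constructor
      · intro h
        refine ⟨fun i => ?_, ?_⟩
        · have := h i.castSucc; rwa [Fin.coeSucc_eq_succ] at this
        · have := h (Fin.last _); rwa [Fin.last_add_one] at this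
      · rintro ⟨hq, hw⟩ i
        induction i using Fin.lastCases with
        | last => rwa [Fin.last_add_one]
        | cast j => rw [Fin.coeSucc_eq_succ]; exact hq j
    rw [e1]
    rw [card_split (fun y : Fin (m+2) → ZMod 2 =>
        Qlin (m+1) y ∧ ¬(y (Fin.last (m+1)) = 1 ∧ y 0 = 1)) (fun y => y 0 = 0)]
    have e2 : Fintype.card {y : Fin (m+2) → ZMod 2 //
          (Qlin (m+1) y ∧ ¬(y (Fin.last (m+1)) = 1 ∧ y 0 = 1)) ∧ y 0 = 0}
        = Fintype.card {y : Fin (m+2) → ZMod 2 // Qlin (m+1) y ∧ y 0 = 0} := by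
      apply Fintype.card_congr
      apply Equiv.subtypeEquivRight
      intro y
      constructor
      · rintro ⟨⟨hq, _⟩, h0⟩; exact ⟨hq, h0⟩
      · rintro ⟨hq, h0⟩
        exact ⟨⟨hq, fun hc => by rw [h0] at hc; exact absurd hc.2 (by decide)⟩, h0⟩
    have e3 : Fintype.card {y : Fin (m+2) → ZMod 2 //
          (Qlin (m+1) y ∧ ¬(y (Fin.last (m+1)) = 1 ∧ y 0 = 1)) ∧ ¬ y 0 = 0}
        = q (m+1) 1 0 := by
      apply Fintype.card_congr
      apply Equiv.subtypeEquivRight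
      intro y
      constructor
      · rintro ⟨⟨hq, hw⟩, h0⟩
        have h1 : y 0 = 1 := zmod2_ne_zero.mp h0
        exact ⟨hq, h1, zmod2_ne_one.mp (fun hl => hw ⟨hl, h1⟩)⟩
      · rintro ⟨hq, h0, hl⟩
        exact ⟨⟨hq, fun hc => by rw [hl] at hc; exact absurd hc.1 (by decide)⟩,
          zmod2_ne_zero.mpr h0⟩
    rw [e2, e3]
    rw [card_split (fun y : Fin (m+2) → ZMod 2 => Qlin (m+1) y ∧ y 0 = 0)
      (fun y => y (Fin.last (m+1)) = 0)]
    have e4 : Fintype.card {y : Fin (m+2) → ZMod 2 //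
          (Qlin (m+1) y ∧ y 0 = 0) ∧ y (Fin.last (m+1)) = 0} = q (m+1) 0 0 := by
      apply Fintype.card_congr
      apply Equiv.subtypeEquivRight
      intro y
      tauto
    have e5 : Fintype.card {y : Fin (m+2) → ZMod 2 //
          (Qlin (m+1) y ∧ y 0 = 0) ∧ ¬ y (Fin.last (m+1)) = 0} = q (m+1) 0 1 := by
      apply Fintype.card_congr
      apply Equiv.subtypeEquivRight
      intro y
      constructor
      · rintro ⟨⟨hq, h0⟩, hl⟩; exact ⟨hq, h0, zmod2_ne_zero.mp hl⟩
      · rintro ⟨hq, h0, hl⟩; exact ⟨⟨hq, h0⟩, zmod2_ne_zero.mpr hl⟩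
    rw [e4, e5, (q00_q10 (m+1)).1, (q00_q10 (m+1)).2, (q01_q11 m).1]
    have h2 : Nat.fib (m+1+2) = Nat.fib (m+1) + Nat.fib (m+2) := Nat.fib_add_two
    have h3 : Nat.fib (m+1+1) = Nat.fib (m+2) := rfl
    clear e1 e2 e3 e4 e5; omega
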